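/- Let 𝓘 be a family of ideals of P. Then the supremum in the clone lattice of the clones C_I for I ∈ 𝓘 equals C_{⋁𝓘}, where ⋁𝓘 is the supremum of 𝓘 in the lattice of ideals of P (the ideal generated by ⋃𝓘). -/

import Mathlib

universe u v

/-- A clone on `X`: a set of finitary operations (of each arity `n + 1 ≥ 1`)
containing all projections and closed under composition. -/
structure Clone (X : Type u) where
  carrier : ∀ n : ℕ, Set ((Fin (n + 1) → X) → X)
  proj_mem : ∀ (n : ℕ) (i : Fin (n + 1)), (fun x => x i) ∈ carrier n
  comp_mem : ∀ {m n : ℕ} (f : (Fin (m + 1) → X) → X)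
      (g : Fin (m + 1) → (Fin (n + 1) → X) → X),
      f ∈ carrier m → (∀ i, g i ∈ carrier n) →
      (fun x => f fun i => g i x) ∈ carrier n

namespace Clone

variable {X : Type u}

theorem carrier_injective : Function.Injective (Clone.carrier (X := X)) := by
  rintro ⟨c, _, _⟩ ⟨d, _, _⟩ h
  simpa using h

instance : PartialOrder (Clone X) where
  le C D := ∀ n, C.carrier n ⊆ D.carrier n
  le_refl _ _ := subset_rfl
  le_trans _ _ _ h₁ h₂ n := (h₁ n).trans (h₂ n)
  le_antisymm _ _ h₁ h₂ :=
    carrier_injective (funext fun n => subset_antisymm (h₁ n) (h₂ n))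

instance : InfSet (Clone X) where
  sInf S :=
    { carrier := fun n => ⋂ C ∈ S, C.carrier n
      proj_mem := fun n i => Set.mem_iInter₂.2 fun C _ => C.proj_mem n i
      comp_mem := fun f g hf hg => Set.mem_iInter₂.2 fun C hC =>
        C.comp_mem f g (Set.mem_iInter₂.1 hf C hC)
          fun i => Set.mem_iInter₂.1 (hg i) C hC }

/-- The lattice `Cl(X)` of all clones on `X` is a complete lattice
(with infima given by intersection). -/
instance : CompleteLattice (Clone X) :=
  completeLatticeOfInf (Clone X) (fun S =>
    ⟨fun C hC n _ hx => Set.mem_iInter₂.1 hx C hC,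
     fun _ hD n _ hx => Set.mem_iInter₂.2 fun C hC => hD hC n hx⟩)

/-- The clone generated by a family `F` of operations:
the smallest clone whose carrier contains `F`. -/
def cloneGen (F : ∀ n : ℕ, Set ((Fin (n + 1) → X) → X)) : Clone X :=
  sInf {C : Clone X | ∀ n, F n ⊆ C.carrier n}

end Clone

attribute [local instance] Classical.propDecidable

noncomputable section Construction

variable {X : Type u} {P : Type v} [SemilatticeSup P]
variable (e0 e1 e2 e4 : X) (Af : P → Set X)

/-- `A = X ∖ {0, 1, 2, 4}`. -/
def Aset : Set X := ({e0, e1, e2, e4} : Set X)ᶜ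

/-- The unary function `φ_p`: the characteristic function of `A_p` on `A`,
fixing `2` and sending `{0, 1, 4}` to `4`. -/
def phi (p : P) (x : X) : X :=
  if x ∈ Af p then e1
  else if x ∈ Aset e0 e1 e2 e4 then e0
  else if x = e2 then e2
  else e4

/-- The ternary function `m_p^{q₁,q₂}`. -/
def mOp (p q1 q2 : P) (x y z : X) : X :=
  if y = phi e0 e1 e2 e4 Af q1 x ∧ z = phi e0 e1 e2 e4 Af q2 x then
    phi e0 e1 e2 e4 Af p x
  else if (x = e2 ∨ y = e2 ∨ z = e2) ∧ y ≠ e1 ∧ y ≠ e4 ∧ z ≠ e1 ∧ z ≠ e4 then e2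
  else e4

/-- `φ_p` as a unary operation (member of arity-1 part of a clone). -/
def phi1 (p : P) : (Fin 1 → X) → X := fun x => phi e0 e1 e2 e4 Af p (x 0)

/-- `m_p^{q₁,q₂}` as a ternary operation. -/
def m3 (p q1 q2 : P) : (Fin 3 → X) → X :=
  fun x => mOp e0 e1 e2 e4 Af p q1 q2 (x 0) (x 1) (x 2)

/-- The family `Φ_Q = {φ_p : p ∈ Q}`, as a family of operations indexed by arity. -/
def PhiFam (Q : Set P) : ∀ n : ℕ, Set ((Fin (n + 1) → X) → X)
  | 0 => {f | ∃ p ∈ Q, f = phi1 e0 e1 e2 e4 Af p}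
  | _ + 1 => ∅

/-- The family `M = {m_p^{q₁,q₂} : p ≤ q₁ ∨ q₂}`, as a family of operations indexed by arity. -/
def MFam : ∀ n : ℕ, Set ((Fin (n + 1) → X) → X)
  | 2 => {f | ∃ p q1 q2 : P, p ≤ q1 ⊔ q2 ∧ f = m3 e0 e1 e2 e4 Af p q1 q2}
  | _ => ∅

/-- The clone `C = ⟨Φ ∪ M⟩`. -/
def CClone : Clone X :=
  Clone.cloneGen fun n => PhiFam e0 e1 e2 e4 Af Set.univ n ∪ MFam e0 e1 e2 e4 Af n

/-- A function depends on its `i`-th variable iff it takes different values on two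
tuples differing only in the `i`-th coordinate. -/
def DependsOnVar {n : ℕ} (t : (Fin n → X) → X) (i : Fin n) : Prop :=
  ∃ a b : Fin n → X, (∀ j, j ≠ i → a j = b j) ∧ t a ≠ t b

/-- A unary function is distracted iff it takes a value in `{2, 4}` somewhere on `A`. -/
def Distracted (f : X → X) : Prop :=
  ∃ a ∈ Aset e0 e1 e2 e4, f a = e2 ∨ f a = e4

/-- The unary function `X → X` corresponding to a unary operation. -/
def toFun1 (u : (Fin 1 → X) → X) : X → X := fun a => u fun _ => a

/-- An `n`-ary member of `C` is unspoilt iff some substitution of unary members of `C`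
into it yields an element of `Φ`. -/
def Unspoilt {n : ℕ} (t : (Fin (n + 1) → X) → X) : Prop :=
  ∃ ts : Fin (n + 1) → (Fin 1 → X) → X,
    (∀ i, ts i ∈ (CClone e0 e1 e2 e4 Af).carrier 0) ∧
    (fun x : Fin 1 → X => t fun i => ts i x) ∈ PhiFam e0 e1 e2 e4 Af Set.univ 0

/-- The family `S` of all spoilt members of `C`. -/
def SpoiltFam (n : ℕ) : Set ((Fin (n + 1) → X) → X) :=
  {t | t ∈ (CClone e0 e1 e2 e4 Af).carrier n ∧ ¬ Unspoilt e0 e1 e2 e4 Af t}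

/-- The clone `C_I = ⟨Φ_I ∪ M ∪ S⟩`. -/
def CI (I : Set P) : Clone X :=
  Clone.cloneGen fun n =>
    PhiFam e0 e1 e2 e4 Af I n ∪ MFam e0 e1 e2 e4 Af n ∪ SpoiltFam e0 e1 e2 e4 Af n

end Construction

/-- An ideal of a join-semilattice: a downward closed subset closed under finite joins. -/
def IsIdealP {P : Type v} [SemilatticeSup P] (I : Set P) : Prop :=
  (∀ p q : P, p ≤ q → q ∈ I → p ∈ I) ∧ ∀ p q : P, p ∈ I → q ∈ I → p ⊔ q ∈ I

/-- The ideal of `P` generated by a subset `I`. -/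
def idealGen {P : Type v} [SemilatticeSup P] (I : Set P) : Set P :=
  ⋂₀ {J : Set P | IsIdealP J ∧ I ⊆ J}

section Aux

namespace Clone

variable {X : Type u}

theorem sInf_carrier (S : Set (Clone X)) (n : ℕ) :
    (sInf S).carrier n = ⋂ C ∈ S, C.carrier n := rfl

theorem subset_cloneGen (F : ∀ n : ℕ, Set ((Fin (n + 1) → X) → X)) (n : ℕ) :
    F n ⊆ (cloneGen F).carrier n := fun f hf => by
  rw [cloneGen, sInf_carrier]
  exact Set.mem_iInter₂.2 fun C hC => hC n hf

theorem cloneGen_le {F : ∀ n : ℕ, Set ((Fin (n + 1) → X) → X)} {C : Clone X}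
    (h : ∀ n, F n ⊆ C.carrier n) : cloneGen F ≤ C :=
  sInf_le h

theorem cloneGen_mono {F G : ∀ n : ℕ, Set ((Fin (n + 1) → X) → X)}
    (h : ∀ n, F n ⊆ G n) : cloneGen F ≤ cloneGen G :=
  cloneGen_le fun n => (h n).trans (subset_cloneGen G n)

end Clone

variable {X : Type u} {P : Type v} [SemilatticeSup P]
variable (e0 e1 e2 e4 : X) (Af : P → Set X)

theorem mOp_phi (p q1 q2 : P) (x : X) :
    mOp e0 e1 e2 e4 Af p q1 q2 x (phi e0 e1 e2 e4 Af q1 x) (phi e0 e1 e2 e4 Af q2 x)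
      = phi e0 e1 e2 e4 Af p x := by
  simp [mOp]

theorem phi1_mem_of_le {D : Clone X}
    (hM : ∀ n, MFam e0 e1 e2 e4 Af n ⊆ D.carrier n)
    {p q1 q2 : P} (hle : p ≤ q1 ⊔ q2)
    (h1 : phi1 e0 e1 e2 e4 Af q1 ∈ D.carrier 0)
    (h2 : phi1 e0 e1 e2 e4 Af q2 ∈ D.carrier 0) :
    phi1 e0 e1 e2 e4 Af p ∈ D.carrier 0 := by
  have hm : m3 e0 e1 e2 e4 Af p q1 q2 ∈ D.carrier 2 :=
    hM 2 ⟨p, q1, q2, hle, rfl⟩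
  have hcomp := D.comp_mem (m3 e0 e1 e2 e4 Af p q1 q2)
      ![fun x => x 0, phi1 e0 e1 e2 e4 Af q1, phi1 e0 e1 e2 e4 Af q2] hm
      (fun i => by
        fin_cases i
        · exact D.proj_mem 0 0
        · exact h1
        · exact h2)
  have key : (fun x : Fin 1 → X => m3 e0 e1 e2 e4 Af p q1 q2 fun i =>
      (![fun x => x 0, phi1 e0 e1 e2 e4 Af q1, phi1 e0 e1 e2 e4 Af q2] :
        Fin 3 → (Fin 1 → X) → X) i x) = phi1 e0 e1 e2 e4 Af p := by
    funext x
    show m3 e0 e1 e2 e4 Af p q1 q2 _ = _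
    simp only [m3, Matrix.cons_val_zero, Matrix.cons_val_one, Matrix.head_cons,
      Matrix.cons_val_two, Matrix.tail_cons]
    exact mOp_phi e0 e1 e2 e4 Af p q1 q2 (x 0)
  rwa [key] at hcomp

theorem phi1_mem_sup {D : Clone X}
    (hM : ∀ n, MFam e0 e1 e2 e4 Af n ⊆ D.carrier n) :
    ∀ (s : Finset P) (hs : s.Nonempty),
      (∀ q ∈ s, phi1 e0 e1 e2 e4 Af q ∈ D.carrier 0) →
      ∀ p ≤ s.sup' hs id, phi1 e0 e1 e2 e4 Af p ∈ D.carrier 0 := by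
  intro s hs
  induction hs using Finset.Nonempty.cons_induction with
  | singleton a =>
    intro hin p hp
    have ha : phi1 e0 e1 e2 e4 Af a ∈ D.carrier 0 := hin a (Finset.mem_singleton_self a)
    refine phi1_mem_of_le e0 e1 e2 e4 Af hM (q1 := a) (q2 := a) ?_ ha ha
    simpa using hp
  | cons a s h hs ih =>
    intro hin p hp
    have hr : phi1 e0 e1 e2 e4 Af (s.sup' hs id) ∈ D.carrier 0 :=
      ih (fun q hq => hin q (Finset.mem_cons_of_mem hq)) _ le_rfl
    have ha : phi1 e0 e1 e2 e4 Af a ∈ D.carrier 0 :=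
      hin a (Finset.mem_cons_self a s)
    refine phi1_mem_of_le e0 e1 e2 e4 Af hM (q1 := a) (q2 := s.sup' hs id) ?_ ha hr
    rw [Finset.sup'_cons hs] at hp
    exact hp

end Aux

/-- The set of elements below a finite join of elements of `T`. -/
def finJoins {P : Type v} [SemilatticeSup P] (T : Set P) : Set P :=
  {p | ∃ (s : Finset P) (hs : s.Nonempty), ↑s ⊆ T ∧ p ≤ s.sup' hs id}

theorem finJoins_ideal {P : Type v} [SemilatticeSup P] (T : Set P) :
    IsIdealP (finJoins T) := by
  constructor
  · rintro p q hpq ⟨s, hs, hsT, hq⟩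
    exact ⟨s, hs, hsT, hpq.trans hq⟩
  · rintro p q ⟨s, hs, hsT, hp⟩ ⟨t, ht, htT, hq⟩
    refine ⟨s ∪ t, hs.mono Finset.subset_union_left, ?_, ?_⟩
    · rw [Finset.coe_union]
      exact Set.union_subset hsT htT
    · refine sup_le (hp.trans ?_) (hq.trans ?_)
      · exact Finset.sup'_mono id Finset.subset_union_left hs
      · exact Finset.sup'_mono id Finset.subset_union_right ht

theorem subset_finJoins {P : Type v} [SemilatticeSup P] (T : Set P) :
    T ⊆ finJoins T := fun p hp =>
  ⟨{p}, Finset.singleton_nonempty p, by simpa using hp, by simp⟩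

theorem idealGen_subset_finJoins {P : Type v} [SemilatticeSup P] (T : Set P) :
    idealGen T ⊆ finJoins T := fun p hp =>
  hp (finJoins T) ⟨finJoins_ideal T, subset_finJoins T⟩

/-- Lemma 8: for a nonempty family of ideals `𝓘`, the supremum of the clones `C_I`
(`I ∈ 𝓘`) in the clone lattice is `C_(⋁𝓘)`, where `⋁𝓘` is the ideal generated
by `⋃₀ 𝓘`. -/
theorem sSup_CI
    {X : Type u} {P : Type v} [Infinite X] [SemilatticeSup P]
    (e0 e1 e2 e4 : X)
    (hdist : e0 ≠ e1 ∧ e0 ≠ e2 ∧ e0 ≠ e4 ∧ e1 ≠ e2 ∧ e1 ≠ e4 ∧ e2 ≠ e4)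
    (hcard : Cardinal.lift.{u} (Cardinal.mk P) ≤ Cardinal.lift.{v} (2 ^ Cardinal.mk X))
    (Af : P → Set X) (hAf : ∀ p : P, Af p ⊆ Aset e0 e1 e2 e4)
    (hcover : ∀ (p : P) (k : ℕ) (q : Fin k → P),
      (∀ i, p ≠ q i) → ¬ Af p ⊆ ⋃ i, Af (q i))
    (𝓘 : Set (Set P)) (h𝓘 : ∀ I ∈ 𝓘, IsIdealP I) (hne : 𝓘.Nonempty) :
    sSup ((fun I => CI e0 e1 e2 e4 Af I) '' 𝓘)
      = CI e0 e1 e2 e4 Af (idealGen (⋃₀ 𝓘)) := by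
  set T : Set P := idealGen (⋃₀ 𝓘) with hT
  apply le_antisymm
  · apply sSup_le
    rintro _ ⟨I, hI, rfl⟩
    apply Clone.cloneGen_mono
    intro n f hf
    rcases hf with (hf | hf) | hf
    · left; left
      cases n with
      | zero =>
        obtain ⟨p, hp, hfp⟩ := hf
        refine ⟨p, ?_, hfp⟩
        intro J hJ
        exact hJ.2 ⟨I, hI, hp⟩
      | succ m => exact hf.elim
    · exact Or.inl (Or.inr hf)
    · exact Or.inr hf
  · set D := sSup ((fun I => CI e0 e1 e2 e4 Af I) '' 𝓘) with hD
    have hCID : ∀ I ∈ 𝓘, CI e0 e1 e2 e4 Af I ≤ D :=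
      fun I hI => le_sSup ⟨I, hI, rfl⟩
    have hgen : ∀ I ∈ 𝓘, ∀ n,
        (PhiFam e0 e1 e2 e4 Af I n ∪ MFam e0 e1 e2 e4 Af n ∪ SpoiltFam e0 e1 e2 e4 Af n)
          ⊆ D.carrier n := by
      intro I hI n
      exact (Clone.subset_cloneGen _ n).trans (hCID I hI n)
    obtain ⟨I₀, hI₀⟩ := hne
    have hM : ∀ n, MFam e0 e1 e2 e4 Af n ⊆ D.carrier n :=
      fun n f hf => hgen I₀ hI₀ n (Or.inl (Or.inr hf))
    apply Clone.cloneGen_le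
    intro n f hf
    rcases hf with (hf | hf) | hf
    · cases n with
      | succ m => exact hf.elim
      | zero =>
        obtain ⟨p, hp, hfp⟩ := hf
        subst hfp
        obtain ⟨s, hs, hsT, hple⟩ := idealGen_subset_finJoins (⋃₀ 𝓘) hp
        refine phi1_mem_sup e0 e1 e2 e4 Af hM s hs ?_ p hple
        intro q hq
        obtain ⟨I, hI, hqI⟩ := hsT hq
        exact hgen I hI 0 (Or.inl (Or.inl ⟨q, hqI, rfl⟩))
    · exact hM n hf
    · exact hgen I₀ hI₀ n (Or.inr hf)
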